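/- arXiv:1305.2633 — 7 statements merged into one kernel-verified Lean document; each statement's English description precedes it below -/
import Mathlib

section
/- Let γ, k, c be real numbers. Define U₀ : ℝ × ℝ → ℝ by U₀(t,x) = c·x², and recursively U_{n+1}(t,x) = U_n(t,x) − ∫₀ᵗ ( ∂U_n/∂s(s,x) + (γ/2)·x²·∂²U_n/∂x²(s,x) − k ) ds. Then for every n ≥ 0 and all t,x ∈ ℝ, U_n(t,x) = c·x²·( Σ_{j=0}^{n} (−γ·t)^j / j! ) + k·t holds for n ≥ 1, and U₀(t,x) = c·x². -/
open intervalIntegral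

noncomputable def S (γ : ℝ) (n : ℕ) (t : ℝ) : ℝ :=
  ∑ j ∈ Finset.range (n + 1), (-γ * t) ^ j / (j.factorial : ℝ)

lemma hasDerivAt_S (γ : ℝ) (n : ℕ) (t : ℝ) :
    HasDerivAt (fun t : ℝ => S γ (n + 1) t) (-γ * S γ n t) t := by
  have h : ∀ j : ℕ, HasDerivAt (fun t : ℝ => (-γ * t) ^ j / (j.factorial : ℝ))
      ((j : ℝ) * (-γ * t) ^ (j - 1) * (-γ * 1) / (j.factorial : ℝ)) t := fun j =>
    (((hasDerivAt_id t).const_mul (-γ)).pow j).div_const _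
  have hsum := HasDerivAt.fun_sum (fun j (_ : j ∈ Finset.range (n + 2)) => h j)
  have key : (∑ j ∈ Finset.range (n + 2),
      (j : ℝ) * (-γ * t) ^ (j - 1) * (-γ * 1) / (j.factorial : ℝ)) = -γ * S γ n t := by
    rw [Finset.sum_range_succ']
    simp only [S, Finset.mul_sum, Nat.cast_zero, zero_mul, zero_div, add_zero]
    apply Finset.sum_congr rfl
    intro i _
    rw [Nat.factorial_succ]
    have h1 : ((i : ℝ) + 1) ≠ 0 := by positivity
    have h2 : ((i.factorial : ℝ)) ≠ 0 := Nat.cast_ne_zero.mpr i.factorial_ne_zero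
    push_cast
    field_simp
  rw [key] at hsum
  exact hsum

lemma deriv2_aux (c A B x : ℝ) :
    deriv (deriv (fun z : ℝ => c * z ^ 2 * A + B)) x = 2 * c * A := by
  have h1 : deriv (fun z : ℝ => c * z ^ 2 * A + B) = fun z => 2 * c * A * z := by
    funext z
    have hd : HasDerivAt (fun z : ℝ => c * z ^ 2 * A + B)
        (c * (2 * z ^ 1) * A) z :=
      (((hasDerivAt_pow 2 z).const_mul c).mul_const A).add_const B
    rw [hd.deriv]; ring
  rw [h1]
  have hd : HasDerivAt (fun z : ℝ => 2 * c * A * z) (2 * c * A) x := by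
    simpa using (hasDerivAt_id x).const_mul (2 * c * A)
  rw [hd.deriv]

/-- Closed form of the VIM iterates for the one-dimensional heat-like equation
`U_t + (γ/2)·x²·U_xx = k` with initial approximation `U₀(t,x) = c·x²`,
where the recursion is
`U_{n+1}(t,x) = U_n(t,x) − ∫₀ᵗ (∂U_n/∂s(s,x) + (γ/2)·x²·∂²U_n/∂x²(s,x) − k) ds`. -/
theorem stmt1 (γ k c : ℝ) (U : ℕ → ℝ → ℝ → ℝ)
    (h0 : ∀ t x : ℝ, U 0 t x = c * x ^ 2)
    (hrec : ∀ n : ℕ, ∀ t x : ℝ,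
      U (n + 1) t x = U n t x -
        ∫ s in (0 : ℝ)..t,
          (deriv (fun s' : ℝ => U n s' x) s
            + (γ / 2) * x ^ 2 * deriv (deriv (fun z : ℝ => U n s z)) x - k)) :
    (∀ n : ℕ, 1 ≤ n → ∀ t x : ℝ,
      U n t x =
        c * x ^ 2 * (∑ j ∈ Finset.range (n + 1), (-γ * t) ^ j / (j.factorial : ℝ))
          + k * t)
    ∧ (∀ t x : ℝ, U 0 t x = c * x ^ 2) := by
  refine ⟨?_, h0⟩
  intro n hn
  induction n, hn using Nat.le_induction with
  | base =>
    intro t x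
    rw [hrec 0 t x]
    have hds : ∀ s : ℝ, deriv (fun s' : ℝ => U 0 s' x) s = 0 := by
      intro s
      have e : (fun s' : ℝ => U 0 s' x) = fun _ => c * x ^ 2 := funext fun s' => h0 s' x
      rw [e, deriv_const]
    have hdx : ∀ s : ℝ, deriv (deriv (fun z : ℝ => U 0 s z)) x = 2 * c := by
      intro s
      have e : (fun z : ℝ => U 0 s z) = fun z => c * z ^ 2 * 1 + 0 := by
        funext z; rw [h0]; ring
      rw [e, deriv2_aux]; ring
    simp only [hds, hdx, zero_add]
    rw [intervalIntegral.integral_const, h0]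
    simp [Finset.sum_range_succ]
    ring
  | succ m hm ih =>
    intro t x
    have ih' : ∀ t x : ℝ, U m t x = c * x ^ 2 * S γ m t + k * t := ih
    obtain ⟨p, rfl⟩ : ∃ p, m = p + 1 := ⟨m - 1, by omega⟩
    show U (p + 1 + 1) t x = c * x ^ 2 * S γ (p + 2) t + k * t
    rw [hrec (p + 1) t x, ih' t x]
    have hint : ∀ s : ℝ,
        (deriv (fun s' : ℝ => U (p + 1) s' x) s
          + (γ / 2) * x ^ 2 * deriv (deriv (fun z : ℝ => U (p + 1) s z)) x - k)
        = (c * x ^ 2 * γ * (-γ) ^ (p + 1) / (((p + 1).factorial : ℝ))) * s ^ (p + 1) := by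
      intro s
      have e1 : (fun s' : ℝ => U (p + 1) s' x)
          = fun s' => c * x ^ 2 * S γ (p + 1) s' + k * s' := funext fun s' => ih' s' x
      have e2 : (fun z : ℝ => U (p + 1) s z)
          = fun z => c * z ^ 2 * S γ (p + 1) s + k * s := funext fun z => ih' s z
      rw [e1, e2, deriv2_aux]
      have hd : HasDerivAt (fun s' : ℝ => c * x ^ 2 * S γ (p + 1) s' + k * s')
          (c * x ^ 2 * (-γ * S γ p s) + k * 1) s :=
        ((hasDerivAt_S γ p s).const_mul (c * x ^ 2)).add ((hasDerivAt_id s).const_mul k)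
      rw [hd.deriv]
      have hSsucc : S γ (p + 1) s = S γ p s + (-γ * s) ^ (p + 1) / (((p + 1).factorial : ℝ)) := by
        simp [S, Finset.sum_range_succ]
      rw [hSsucc, mul_pow]
      ring
    simp only [hint]
    rw [intervalIntegral.integral_const_mul, integral_pow]
    have hSsucc : S γ (p + 2) t = S γ (p + 1) t + (-γ * t) ^ (p + 2) / (((p + 2).factorial : ℝ)) := by
      simp [S, Finset.sum_range_succ]
    rw [hSsucc]
    have hf1 : (((p + 1).factorial : ℝ)) ≠ 0 := Nat.cast_ne_zero.mpr (p + 1).factorial_ne_zero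
    have hf2 : ((p : ℝ) + 1 + 1) ≠ 0 := by positivity
    have hfact : (((p + 2).factorial : ℝ)) = ((p : ℝ) + 2) * ((p + 1).factorial : ℝ) := by
      rw [show p + 2 = (p + 1) + 1 from rfl, Nat.factorial_succ]
      push_cast; ring
    rw [hfact, mul_pow]
    push_cast
    field_simp
    ring
end

section
/- Let λ > 0 and let k₁, k₂, c₁, c₂, γ₁, γ₂ : [0,1] → ℝ be differentiable with k₁′(α) = c₁′(α) = γ₁′(α) = λ and k₂′(α) = c₂′(α) = γ₂′(α) = −λ for all α ∈ [0,1]. Define u₁(t,x,α) = c₁(α)·x²·exp(−γ₁(α)·t) + k₁(α)·t and u₂(t,x,α) = c₂(α)·x²·exp(−γ₂(α)·t) + k₂(α)·t. Fix t > 0 and x > 0, and suppose 0 < c₁(α) ≤ c₂(α) and 1 − c₂(α)·t > 0 for all α ∈ [0,1]. Then for every α ∈ [0,1], ∂u₁/∂α(t,x,α) > 0 and ∂u₂/∂α(t,x,α) < 0. -/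
lemma aux_deriv (c γ k : ℝ → ℝ) (dc dγ dk t x α : ℝ)
    (hc : HasDerivAt c dc α) (hγ : HasDerivAt γ dγ α) (hk : HasDerivAt k dk α) :
    HasDerivAt (fun a : ℝ => c a * x ^ 2 * Real.exp (-γ a * t) + k a * t)
      ((dc * x ^ 2) * Real.exp (-γ α * t)
        + (c α * x ^ 2) * (Real.exp (-γ α * t) * (-dγ * t)) + dk * t) α := by
  have h1 : HasDerivAt (fun a : ℝ => c a * x ^ 2) (dc * x ^ 2) α := hc.mul_const _
  have h2 : HasDerivAt (fun a : ℝ => -γ a * t) (-dγ * t) α := (hγ.neg).mul_const _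
  have h3 : HasDerivAt (fun a : ℝ => Real.exp (-γ a * t))
      (Real.exp (-γ α * t) * (-dγ * t)) α := (Real.hasDerivAt_exp _).comp α h2
  exact (h1.mul h3).add (hk.mul_const _)

/-- Strict monotonicity in `α` of the endpoint functions
`u₁(t,x,α) = c₁(α)x²exp(−γ₁(α)t) + k₁(α)t` (increasing) and
`u₂(t,x,α) = c₂(α)x²exp(−γ₂(α)t) + k₂(α)t` (decreasing)
of the candidate Seikkala solution, under the stated hypotheses on the
fuzzy parameters. -/
theorem stmt3 (lam : ℝ) (hlam : 0 < lam)
    (k₁ k₂ c₁ c₂ γ₁ γ₂ : ℝ → ℝ)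
    (hk₁ : ∀ α ∈ Set.Icc (0 : ℝ) 1, HasDerivAt k₁ lam α)
    (hc₁ : ∀ α ∈ Set.Icc (0 : ℝ) 1, HasDerivAt c₁ lam α)
    (hγ₁ : ∀ α ∈ Set.Icc (0 : ℝ) 1, HasDerivAt γ₁ lam α)
    (hk₂ : ∀ α ∈ Set.Icc (0 : ℝ) 1, HasDerivAt k₂ (-lam) α)
    (hc₂ : ∀ α ∈ Set.Icc (0 : ℝ) 1, HasDerivAt c₂ (-lam) α)
    (hγ₂ : ∀ α ∈ Set.Icc (0 : ℝ) 1, HasDerivAt γ₂ (-lam) α)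
    (u₁ u₂ : ℝ → ℝ → ℝ → ℝ)
    (hu₁ : ∀ t x α : ℝ, u₁ t x α = c₁ α * x ^ 2 * Real.exp (-γ₁ α * t) + k₁ α * t)
    (hu₂ : ∀ t x α : ℝ, u₂ t x α = c₂ α * x ^ 2 * Real.exp (-γ₂ α * t) + k₂ α * t)
    (t x : ℝ) (ht : 0 < t) (hx : 0 < x)
    (hc : ∀ α ∈ Set.Icc (0 : ℝ) 1, 0 < c₁ α ∧ c₁ α ≤ c₂ α)
    (hct : ∀ α ∈ Set.Icc (0 : ℝ) 1, 0 < 1 - c₂ α * t) :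
    ∀ α ∈ Set.Icc (0 : ℝ) 1,
      0 < deriv (fun a : ℝ => u₁ t x a) α ∧ deriv (fun a : ℝ => u₂ t x a) α < 0 := by
  intro α hα
  have e₁ : (fun a : ℝ => u₁ t x a) = fun a : ℝ =>
      c₁ a * x ^ 2 * Real.exp (-γ₁ a * t) + k₁ a * t := funext fun a => hu₁ t x a
  have e₂ : (fun a : ℝ => u₂ t x a) = fun a : ℝ =>
      c₂ a * x ^ 2 * Real.exp (-γ₂ a * t) + k₂ a * t := funext fun a => hu₂ t x a
  have d₁ := (aux_deriv c₁ γ₁ k₁ lam lam lam t x α (hc₁ α hα) (hγ₁ α hα) (hk₁ α hα)).deriv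
  have d₂ := (aux_deriv c₂ γ₂ k₂ (-lam) (-lam) (-lam) t x α
      (hc₂ α hα) (hγ₂ α hα) (hk₂ α hα)).deriv
  rw [e₁, e₂, d₁, d₂]
  have hE₁ : 0 < Real.exp (-γ₁ α * t) := Real.exp_pos _
  have hE₂ : 0 < Real.exp (-γ₂ α * t) := Real.exp_pos _
  have hx2 : 0 < x ^ 2 := by positivity
  obtain ⟨hc1, hc12⟩ := hc α hα
  have hct' := hct α hα
  have h1t : 0 < 1 - c₁ α * t := by nlinarith
  constructor
  · nlinarith [mul_pos (mul_pos hlam hx2) (mul_pos hE₁ h1t), mul_pos hlam ht]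
  · nlinarith [mul_pos (mul_pos hlam hx2) (mul_pos hE₂ hct'), mul_pos hlam ht]
end

section
/- Let γ, β, k, c₁, c₂ be real numbers. Define U₀(t,x,y) = c₁·y² − c₂·x², and recursively U_{n+1}(t,x,y) = U_n(t,x,y) − ∫₀ᵗ ( ∂U_n/∂s(s,x,y) + (γ/2)·x²·∂²U_n/∂x²(s,x,y) + (β/2)·y²·∂²U_n/∂y²(s,x,y) − k·x·y ) ds. Then for every n ≥ 1 and all t,x,y ∈ ℝ, U_n(t,x,y) = c₁·y²·( Σ_{j=0}^{n} (−β·t)^j / j! ) − c₂·x²·( Σ_{j=0}^{n} (−γ·t)^j / j! ) + k·x·y·t, and consequently lim_{n→∞} U_n(t,x,y) = c₁·y²·exp(−β·t) − c₂·x²·exp(−γ·t) + k·x·y·t. -/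
open Filter intervalIntegral

noncomputable def pS (b : ℝ) (n : ℕ) (t : ℝ) : ℝ :=
  ∑ j ∈ Finset.range (n + 1), (-b * t) ^ j / (j.factorial : ℝ)

lemma pS_hasDerivAt (b : ℝ) (n : ℕ) (s : ℝ) :
    HasDerivAt (pS b n) (b * (-b * s) ^ n / n.factorial - b * pS b n s) s := by
  have h : HasDerivAt (pS b n)
      (∑ j ∈ Finset.range (n + 1),
        (-b) ^ j / (j.factorial : ℝ) * (j * s ^ (j - 1))) s := by
    have hfun : pS b n = fun t => ∑ j ∈ Finset.range (n + 1),
        (-b) ^ j / (j.factorial : ℝ) * t ^ j := by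
      funext t; unfold pS
      refine Finset.sum_congr rfl fun j _ => ?_
      rw [mul_pow]; ring
    rw [hfun]
    apply HasDerivAt.fun_sum
    intro j _
    simpa [mul_comm, mul_assoc] using
      (hasDerivAt_pow j s).const_mul ((-b) ^ j / (j.factorial : ℝ))
  convert h using 1
  rw [Finset.sum_range_succ']
  have hterm : ∀ j : ℕ,
      (-b) ^ (j + 1) / ((j + 1).factorial : ℝ) * ((j + 1 : ℕ) * s ^ (j + 1 - 1))
        = -b * ((-b * s) ^ j / (j.factorial : ℝ)) := by
    intro j
    have hf : ((j + 1).factorial : ℝ) = (j + 1) * (j.factorial : ℝ) := by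
      rw [Nat.factorial_succ]; push_cast; ring
    have hj : (j.factorial : ℝ) ≠ 0 := Nat.cast_ne_zero.2 j.factorial_ne_zero
    have hj1 : ((j : ℝ) + 1) ≠ 0 := by positivity
    rw [hf, pow_succ, mul_pow]
    push_cast
    field_simp
  rw [Finset.sum_congr rfl fun j _ => hterm j]
  rw [← Finset.mul_sum]
  have : pS b n s = (∑ j ∈ Finset.range n, (-b * s) ^ j / (j.factorial : ℝ))
      + (-b * s) ^ n / (n.factorial : ℝ) := by
    unfold pS; rw [Finset.sum_range_succ]
  rw [this]
  simp
  ring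

lemma pS_succ (b : ℝ) (n : ℕ) (t : ℝ) :
    pS b (n + 1) t = pS b n t + (-b * t) ^ (n + 1) / ((n + 1).factorial : ℝ) := by
  unfold pS; rw [Finset.sum_range_succ]

lemma deriv2_quadratic (A B C x : ℝ) :
    deriv (deriv (fun z : ℝ => A + B * z ^ 2 + C * z)) x = 2 * B := by
  have h1 : deriv (fun z : ℝ => A + B * z ^ 2 + C * z) = fun z => 2 * B * z + C := by
    funext z
    have : HasDerivAt (fun z : ℝ => A + B * z ^ 2 + C * z) (2 * B * z + C) z := by
      have h := ((hasDerivAt_const z A).add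
        ((hasDerivAt_pow 2 z).const_mul B)).add ((hasDerivAt_id z).const_mul C)
      refine h.congr_deriv ?_; simp; ring
    exact this.deriv
  rw [h1]
  have h2 : HasDerivAt (fun z : ℝ => 2 * B * z + C) (2 * B) x := by
    have h := ((hasDerivAt_id x).const_mul (2 * B)).add_const C
    refine h.congr_deriv ?_; simp
  exact h2.deriv

lemma step_lemma (γ β k c₁ c₂ a : ℝ) (n : ℕ) (U : ℕ → ℝ → ℝ → ℝ → ℝ)
    (hrec : ∀ t x y : ℝ,
      U (n + 1) t x y = U n t x y -
        ∫ s in (0 : ℝ)..t,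
          (deriv (fun s' : ℝ => U n s' x y) s
            + (γ / 2) * x ^ 2 * deriv (deriv (fun z : ℝ => U n s z y)) x
            + (β / 2) * y ^ 2 * deriv (deriv (fun z : ℝ => U n s x z)) y
            - k * x * y))
    (hU : ∀ t x y : ℝ,
      U n t x y = c₁ * y ^ 2 * pS β n t - c₂ * x ^ 2 * pS γ n t + a * x * y * t) :
    ∀ t x y : ℝ,
      U (n + 1) t x y = c₁ * y ^ 2 * pS β (n + 1) t - c₂ * x ^ 2 * pS γ (n + 1) t
        + k * x * y * t := by
  intro t x y
  rw [hrec t x y]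
  -- derivative in time
  have hdt : ∀ s : ℝ, deriv (fun s' : ℝ => U n s' x y) s
      = c₁ * y ^ 2 * (β * (-β * s) ^ n / n.factorial - β * pS β n s)
        - c₂ * x ^ 2 * (γ * (-γ * s) ^ n / n.factorial - γ * pS γ n s)
        + a * x * y := by
    intro s
    have hfun : (fun s' : ℝ => U n s' x y)
        = fun s' => c₁ * y ^ 2 * pS β n s' - c₂ * x ^ 2 * pS γ n s' + a * x * y * s' :=
      funext fun s' => hU s' x y
    rw [hfun]
    have h := (((pS_hasDerivAt β n s).const_mul (c₁ * y ^ 2)).sub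
      ((pS_hasDerivAt γ n s).const_mul (c₂ * x ^ 2))).add
      ((hasDerivAt_id s).const_mul (a * x * y))
    have h' : HasDerivAt
        (fun s' => c₁ * y ^ 2 * pS β n s' - c₂ * x ^ 2 * pS γ n s' + a * x * y * s')
        (c₁ * y ^ 2 * (β * (-β * s) ^ n / n.factorial - β * pS β n s)
          - c₂ * x ^ 2 * (γ * (-γ * s) ^ n / n.factorial - γ * pS γ n s)
          + a * x * y) s := by
      refine h.congr_deriv ?_; simp
    exact h'.deriv
  -- second derivative in x
  have hdx : ∀ s : ℝ, deriv (deriv (fun z : ℝ => U n s z y)) x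
      = 2 * (-(c₂ * pS γ n s)) := by
    intro s
    have hfun : (fun z : ℝ => U n s z y)
        = fun z => (c₁ * y ^ 2 * pS β n s) + (-(c₂ * pS γ n s)) * z ^ 2
            + (a * y * s) * z := by
      funext z; rw [hU s z y]; ring
    rw [hfun, deriv2_quadratic]
  -- second derivative in y
  have hdy : ∀ s : ℝ, deriv (deriv (fun z : ℝ => U n s x z)) y
      = 2 * (c₁ * pS β n s) := by
    intro s
    have hfun : (fun z : ℝ => U n s x z)
        = fun z => (-(c₂ * x ^ 2 * pS γ n s)) + (c₁ * pS β n s) * z ^ 2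
            + (a * x * s) * z := by
      funext z; rw [hU s x z]; ring
    rw [hfun, deriv2_quadratic]
  -- the integrand simplifies to a monomial plus constant
  have hint : (fun s : ℝ =>
      (deriv (fun s' : ℝ => U n s' x y) s
        + (γ / 2) * x ^ 2 * deriv (deriv (fun z : ℝ => U n s z y)) x
        + (β / 2) * y ^ 2 * deriv (deriv (fun z : ℝ => U n s x z)) y
        - k * x * y))
      = fun s : ℝ =>
        (c₁ * y ^ 2 * β * (-β) ^ n / n.factorial
          - c₂ * x ^ 2 * γ * (-γ) ^ n / n.factorial) * s ^ n
        + (a * x * y - k * x * y) := by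
    funext s
    rw [hdt s, hdx s, hdy s]
    rw [show (-β * s) ^ n = (-β) ^ n * s ^ n from mul_pow _ _ _,
        show (-γ * s) ^ n = (-γ) ^ n * s ^ n from mul_pow _ _ _]
    ring
  rw [hint]
  -- compute the integral
  have hivalue : (∫ s in (0 : ℝ)..t,
      ((c₁ * y ^ 2 * β * (-β) ^ n / n.factorial
        - c₂ * x ^ 2 * γ * (-γ) ^ n / n.factorial) * s ^ n
        + (a * x * y - k * x * y)))
      = (c₁ * y ^ 2 * β * (-β) ^ n / n.factorial
          - c₂ * x ^ 2 * γ * (-γ) ^ n / n.factorial) * (t ^ (n + 1) / (n + 1))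
        + (a * x * y - k * x * y) * t := by
    rw [intervalIntegral.integral_add
      (show IntervalIntegrable (fun s : ℝ => _ * s ^ n) _ _ _ from (continuous_const.mul (continuous_pow n)).intervalIntegrable _ _)
      (intervalIntegrable_const)]
    rw [intervalIntegral.integral_const_mul, integral_pow, intervalIntegral.integral_const]
    simp
    ring
  rw [hivalue, hU t x y, pS_succ, pS_succ]
  have hf : ((n + 1).factorial : ℝ) = ((n : ℝ) + 1) * (n.factorial : ℝ) := by
    rw [Nat.factorial_succ]; push_cast; ring
  have hn : (n.factorial : ℝ) ≠ 0 := Nat.cast_ne_zero.2 n.factorial_ne_zero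
  have hn1 : ((n : ℝ) + 1) ≠ 0 := by positivity
  rw [hf, show (-β * t) ^ (n + 1) = -β * t * ((-β) ^ n * t ^ n) by
        rw [pow_succ, mul_pow]; ring,
      show (-γ * t) ^ (n + 1) = -γ * t * ((-γ) ^ n * t ^ n) by
        rw [pow_succ, mul_pow]; ring]
  field_simp
  ring

/-- Closed form and limit of the VIM iterates for the two-dimensional heat-like
equation `U_t + (γ/2)x²U_xx + (β/2)y²U_yy = kxy` with initial approximation
`U₀(t,x,y) = c₁y² − c₂x²`. -/
theorem stmt5 (γ β k c₁ c₂ : ℝ) (U : ℕ → ℝ → ℝ → ℝ → ℝ)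
    (h0 : ∀ t x y : ℝ, U 0 t x y = c₁ * y ^ 2 - c₂ * x ^ 2)
    (hrec : ∀ n : ℕ, ∀ t x y : ℝ,
      U (n + 1) t x y = U n t x y -
        ∫ s in (0 : ℝ)..t,
          (deriv (fun s' : ℝ => U n s' x y) s
            + (γ / 2) * x ^ 2 * deriv (deriv (fun z : ℝ => U n s z y)) x
            + (β / 2) * y ^ 2 * deriv (deriv (fun z : ℝ => U n s x z)) y
            - k * x * y)) :
    (∀ n : ℕ, 1 ≤ n → ∀ t x y : ℝ,
      U n t x y =
        c₁ * y ^ 2 * (∑ j ∈ Finset.range (n + 1), (-β * t) ^ j / (j.factorial : ℝ))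
          - c₂ * x ^ 2 * (∑ j ∈ Finset.range (n + 1), (-γ * t) ^ j / (j.factorial : ℝ))
          + k * x * y * t)
    ∧ (∀ t x y : ℝ,
      Tendsto (fun n : ℕ => U n t x y) atTop
        (nhds (c₁ * y ^ 2 * Real.exp (-β * t)
          - c₂ * x ^ 2 * Real.exp (-γ * t) + k * x * y * t))) := by
  have key : ∀ n : ℕ, 1 ≤ n → ∀ t x y : ℝ,
      U n t x y = c₁ * y ^ 2 * pS β n t - c₂ * x ^ 2 * pS γ n t + k * x * y * t := by
    intro n hn
    induction n with
    | zero => omega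
    | succ m ih =>
      rcases Nat.eq_zero_or_pos m with hm | hm
      · subst hm
        have hU0 : ∀ t x y : ℝ,
            U 0 t x y = c₁ * y ^ 2 * pS β 0 t - c₂ * x ^ 2 * pS γ 0 t
              + 0 * x * y * t := by
          intro t x y
          rw [h0 t x y]
          unfold pS
          simp
        exact step_lemma γ β k c₁ c₂ 0 0 U (hrec 0) hU0
      · exact step_lemma γ β k c₁ c₂ k m U (hrec m) (ih hm)
  constructor
  · intro n hn t x y
    exact key n hn t x y
  · intro t x y
    have hpS : ∀ b : ℝ, Tendsto (fun n : ℕ => pS b n t) atTop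
        (nhds (Real.exp (-b * t))) := by
      intro b
      have hs : HasSum (fun j : ℕ => (-b * t) ^ j / (j.factorial : ℝ))
          (Real.exp (-b * t)) := by
        rw [Real.exp_eq_exp_ℝ]
        exact NormedSpace.expSeries_div_hasSum_exp (-b * t)
      have h1 := hs.tendsto_sum_nat
      have h2 := h1.comp (tendsto_add_atTop_nat 1)
      exact h2
    have hlim : Tendsto
        (fun n : ℕ => c₁ * y ^ 2 * pS β n t - c₂ * x ^ 2 * pS γ n t + k * x * y * t)
        atTop
        (nhds (c₁ * y ^ 2 * Real.exp (-β * t)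
          - c₂ * x ^ 2 * Real.exp (-γ * t) + k * x * y * t)) := by
      exact (((hpS β).const_mul _).sub ((hpS γ).const_mul _)).add_const _
    refine hlim.congr' ?_
    filter_upwards [eventually_ge_atTop 1] with n hn
    exact (key n hn t x y).symm
end

section
/- Let γ₁, γ₂, k₁, k₂, c₁, c₂ be real numbers. Define u₁(t,x) = (γ₁/12)·k₂·t⁴ − (γ₁/6)·k₂·x·t⁴ − (1/3)·k₂·x²·t³ + c₁·x² + 2·γ₁·c₁·x·t − γ₁·c₁·t and u₂(t,x) = (γ₂/12)·k₁·t⁴ − (γ₂/6)·k₁·x·t⁴ − (1/3)·k₁·x²·t³ + c₂·x² + 2·γ₂·c₂·x·t − γ₂·c₂·t. Then for all t,x ∈ ℝ: ∂u₁/∂t(t,x) + γ₁·(1/2 − x)·∂²u₁/∂x²(t,x) = −k₂·x²·t², ∂u₂/∂t(t,x) + γ₂·(1/2 − x)·∂²u₂/∂x²(t,x) = −k₁·x²·t², and u₁(0,x) = c₁·x², u₂(0,x) = c₂·x². -/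
lemma quartic_hasDerivAt (a b e f t : ℝ) :
    HasDerivAt (fun s : ℝ => a * s ^ 4 + b * s ^ 3 + e * s + f)
      (4 * a * t ^ 3 + 3 * b * t ^ 2 + e) t := by
  have h4 := (hasDerivAt_pow 4 t).const_mul a
  have h3 := (hasDerivAt_pow 3 t).const_mul b
  have h1 := (hasDerivAt_id t).const_mul e
  have h0 := hasDerivAt_const t f
  have := ((h4.add h3).add h1).add h0
  exact this.congr_deriv (by ring)

lemma quad_hasDerivAt (A B C z : ℝ) :
    HasDerivAt (fun y : ℝ => A * y ^ 2 + B * y + C) (2 * A * z + B) z := by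
  have h2 := (hasDerivAt_pow 2 z).const_mul A
  have h1 := (hasDerivAt_id z).const_mul B
  have h0 := hasDerivAt_const z C
  have := (h2.add h1).add h0
  exact this.congr_deriv (by ring)

lemma lin_hasDerivAt (A B z : ℝ) :
    HasDerivAt (fun y : ℝ => 2 * A * y + B) (2 * A) z := by
  have h1 := (hasDerivAt_id z).const_mul (2 * A)
  have h0 := hasDerivAt_const z B
  have := h1.add h0
  exact this.congr_deriv (by ring)

lemma main_lem (γ k c : ℝ) (u : ℝ × ℝ → ℝ)
    (hu : ∀ t x : ℝ,
      u (t, x) = (γ / 12) * k * t ^ 4 - (γ / 6) * k * x * t ^ 4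
        - (1 / 3) * k * x ^ 2 * t ^ 3 + c * x ^ 2 + 2 * γ * c * x * t
        - γ * c * t) (t x : ℝ) :
    deriv (fun s : ℝ => u (s, x)) t
      + γ * (1 / 2 - x) * deriv (deriv (fun z : ℝ => u (t, z))) x
    = -k * x ^ 2 * t ^ 2 := by
  have ht : (fun s : ℝ => u (s, x))
      = fun s : ℝ => (γ / 12 * k - γ / 6 * k * x) * s ^ 4
        + (-(1 / 3) * k * x ^ 2) * s ^ 3 + (2 * γ * c * x - γ * c) * s
        + c * x ^ 2 := by
    funext s; rw [hu]; ring
  have hdt : deriv (fun s : ℝ => u (s, x)) t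
      = 4 * (γ / 12 * k - γ / 6 * k * x) * t ^ 3
        + 3 * (-(1 / 3) * k * x ^ 2) * t ^ 2 + (2 * γ * c * x - γ * c) := by
    rw [ht]; exact (quartic_hasDerivAt _ _ _ _ t).deriv
  have hx : (fun z : ℝ => u (t, z))
      = fun z : ℝ => (c - 1 / 3 * k * t ^ 3) * z ^ 2
        + (-(γ / 6) * k * t ^ 4 + 2 * γ * c * t) * z
        + (γ / 12 * k * t ^ 4 - γ * c * t) := by
    funext z; rw [hu]; ring
  have hdx : deriv (fun z : ℝ => u (t, z))
      = fun z : ℝ => 2 * (c - 1 / 3 * k * t ^ 3) * z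
        + (-(γ / 6) * k * t ^ 4 + 2 * γ * c * t) := by
    funext z; rw [hx]; exact (quad_hasDerivAt _ _ _ z).deriv
  have hdxx : deriv (deriv (fun z : ℝ => u (t, z))) x
      = 2 * (c - 1 / 3 * k * t ^ 3) := by
    rw [hdx]; exact (lin_hasDerivAt _ _ x).deriv
  rw [hdt, hdxx]; ring



/-- The endpoint functions `u₁`, `u₂` of the Seikkala solution of the fuzzified
heat-like model `U_t + γ(1/2 − x)U_xx = −kx²t²` satisfy the coupled system and
the initial conditions. -/
theorem stmt9 (γ₁ γ₂ k₁ k₂ c₁ c₂ : ℝ) (u₁ u₂ : ℝ × ℝ → ℝ)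
    (hu₁ : ∀ t x : ℝ,
      u₁ (t, x) = (γ₁ / 12) * k₂ * t ^ 4 - (γ₁ / 6) * k₂ * x * t ^ 4
        - (1 / 3) * k₂ * x ^ 2 * t ^ 3 + c₁ * x ^ 2 + 2 * γ₁ * c₁ * x * t
        - γ₁ * c₁ * t)
    (hu₂ : ∀ t x : ℝ,
      u₂ (t, x) = (γ₂ / 12) * k₁ * t ^ 4 - (γ₂ / 6) * k₁ * x * t ^ 4
        - (1 / 3) * k₁ * x ^ 2 * t ^ 3 + c₂ * x ^ 2 + 2 * γ₂ * c₂ * x * t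
        - γ₂ * c₂ * t) :
    (∀ t x : ℝ,
      deriv (fun s : ℝ => u₁ (s, x)) t
        + γ₁ * (1 / 2 - x) * deriv (deriv (fun z : ℝ => u₁ (t, z))) x
      = -k₂ * x ^ 2 * t ^ 2)
    ∧ (∀ t x : ℝ,
      deriv (fun s : ℝ => u₂ (s, x)) t
        + γ₂ * (1 / 2 - x) * deriv (deriv (fun z : ℝ => u₂ (t, z))) x
      = -k₁ * x ^ 2 * t ^ 2)
    ∧ (∀ x : ℝ, u₁ (0, x) = c₁ * x ^ 2)
    ∧ (∀ x : ℝ, u₂ (0, x) = c₂ * x ^ 2) := by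
  refine ⟨fun t x => main_lem γ₁ k₂ c₁ u₁ hu₁ t x,
    fun t x => main_lem γ₂ k₁ c₂ u₂ hu₂ t x, fun x => ?_, fun x => ?_⟩
  · simp [hu₁]
  · simp [hu₂]
end

section
/- Let γ ≠ 0 and k, c be real numbers. Define U₀(t,x) = c·sin(x) and recursively U_{n+1}(t,x) = U_n(t,x) − ∫₀ᵗ ( ∂U_n/∂s(s,x) − γ·∂²U_n/∂x²(s,x) + k·cos(x) ) ds. Then for every n ≥ 1 and all t,x ∈ ℝ, U_n(t,x) = c·sin(x)·( Σ_{j=0}^{n} (−γ·t)^j / j! ) + (k/γ)·cos(x)·( Σ_{j=1}^{n} (−γ·t)^j / j! ), and consequently lim_{n→∞} U_n(t,x) = c·sin(x)·exp(−γ·t) + (k/γ)·cos(x)·(exp(−γ·t) − 1). -/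
open Filter intervalIntegral

private lemma exp_partial' (x : ℝ) :
    Tendsto (fun n : ℕ => ∑ j ∈ Finset.range n, x ^ j / (j.factorial : ℝ)) atTop
      (nhds (Real.exp x)) := by
  have h := (NormedSpace.expSeries_div_summable x).hasSum.tendsto_sum_nat
  rw [Real.exp_eq_exp_ℝ, NormedSpace.exp_eq_tsum_div]
  exact h

private lemma Sderiv' (γ : ℝ) (n : ℕ) (s : ℝ) :
    HasDerivAt (fun s : ℝ => ∑ j ∈ Finset.range (n + 1), (-γ * s) ^ j / (j.factorial : ℝ))
      (-γ * ∑ j ∈ Finset.range n, (-γ * s) ^ j / (j.factorial : ℝ)) s := by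
  have h : ∀ j ∈ Finset.range (n+1), HasDerivAt (fun s : ℝ => (-γ * s) ^ j / (j.factorial : ℝ))
      ((j : ℝ) * (-γ * s) ^ (j - 1) * (-γ) / (j.factorial : ℝ)) s := by
    intro j _
    have h1 : HasDerivAt (fun s : ℝ => -γ * s) (-γ) s := by
      simpa using (hasDerivAt_id s).const_mul (-γ)
    exact ((hasDerivAt_pow j (-γ * s)).comp s h1).div_const _
  have := HasDerivAt.fun_sum h
  refine this.congr_deriv ?_
  rw [Finset.mul_sum, Finset.sum_range_succ']
  norm_num
  rw [← Finset.sum_neg_distrib]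
  apply Finset.sum_congr rfl
  intro i _
  push_cast [Nat.factorial_succ]
  have : (i.factorial : ℝ) ≠ 0 := Nat.cast_ne_zero.2 i.factorial_ne_zero
  field_simp

private lemma closed_form (γ k c : ℝ) (hγ : γ ≠ 0) (U : ℕ → ℝ → ℝ → ℝ)
    (h0 : ∀ t x : ℝ, U 0 t x = c * Real.sin x)
    (hrec : ∀ n : ℕ, ∀ t x : ℝ,
      U (n + 1) t x = U n t x -
        ∫ s in (0 : ℝ)..t,
          (deriv (fun s' : ℝ => U n s' x) s
            - γ * deriv (deriv (fun z : ℝ => U n s z)) x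
            + k * Real.cos x)) :
    ∀ n : ℕ, ∀ t x : ℝ,
      U n t x = c * Real.sin x * (∑ j ∈ Finset.range (n + 1), (-γ * t) ^ j / (j.factorial : ℝ))
        + (k / γ) * Real.cos x *
          ((∑ j ∈ Finset.range (n + 1), (-γ * t) ^ j / (j.factorial : ℝ)) - 1) := by
  intro n
  induction n with
  | zero => intro t x; simp [h0]
  | succ n IH =>
    intro t x
    set S : ℝ → ℝ := fun s => ∑ j ∈ Finset.range (n + 1), (-γ * s) ^ j / (j.factorial : ℝ)
      with hS
    set D : ℝ → ℝ := fun s => ∑ j ∈ Finset.range n, (-γ * s) ^ j / (j.factorial : ℝ) with hD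
    -- time derivative
    have hdt : ∀ s : ℝ, deriv (fun s' : ℝ => U n s' x) s
        = (c * Real.sin x + (k / γ) * Real.cos x) * (-γ * D s) := by
      intro s
      have hfun : (fun s' : ℝ => U n s' x)
          = fun s' : ℝ => c * Real.sin x * S s' + (k / γ) * Real.cos x * (S s' - 1) := by
        funext s'; exact IH s' x
      rw [hfun]
      have h1 : HasDerivAt (fun s' : ℝ => c * Real.sin x * S s' + (k / γ) * Real.cos x * (S s' - 1))
          ((c * Real.sin x + (k / γ) * Real.cos x) * (-γ * D s)) s := by
        have hs := Sderiv' γ n s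
        have := ((hs.const_mul (c * Real.sin x)).fun_add
          (((hs.sub_const 1).const_mul ((k / γ) * Real.cos x))))
        refine this.congr_deriv ?_
        ring
      exact h1.deriv
    -- space second derivative
    have hdx : ∀ s : ℝ, deriv (deriv (fun z : ℝ => U n s z)) x
        = -(c * Real.sin x) * S s - (k / γ) * Real.cos x * (S s - 1) := by
      intro s
      have hfun : (fun z : ℝ => U n s z)
          = fun z : ℝ => c * Real.sin z * S s + (k / γ) * Real.cos z * (S s - 1) := by
        funext z; exact IH s z
      rw [hfun]
      have hd1 : deriv (fun z : ℝ => c * Real.sin z * S s + (k / γ) * Real.cos z * (S s - 1))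
          = fun z : ℝ => c * Real.cos z * S s - (k / γ) * Real.sin z * (S s - 1) := by
        funext z
        have : HasDerivAt (fun z : ℝ => c * Real.sin z * S s + (k / γ) * Real.cos z * (S s - 1))
            (c * Real.cos z * S s - (k / γ) * Real.sin z * (S s - 1)) z := by
          have h1 := (((Real.hasDerivAt_sin z).const_mul c).mul_const (S s))
          have h2 := (((Real.hasDerivAt_cos z).const_mul (k / γ)).mul_const (S s - 1))
          refine (h1.fun_add h2).congr_deriv ?_
          ring
        exact this.deriv
      rw [hd1]
      have : HasDerivAt (fun z : ℝ => c * Real.cos z * S s - (k / γ) * Real.sin z * (S s - 1))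
          (-(c * Real.sin x) * S s - (k / γ) * Real.cos x * (S s - 1)) x := by
        have h1 := (((Real.hasDerivAt_cos x).const_mul c).mul_const (S s))
        have h2 := (((Real.hasDerivAt_sin x).const_mul (k / γ)).mul_const (S s - 1))
        refine (h1.fun_sub h2).congr_deriv ?_
        ring
      exact this.deriv
    -- integrand simplification
    have hint : (fun s : ℝ => deriv (fun s' : ℝ => U n s' x) s
        - γ * deriv (deriv (fun z : ℝ => U n s z)) x + k * Real.cos x)
        = fun s : ℝ => ((γ * c * Real.sin x + k * Real.cos x) * (-γ) ^ n / (n.factorial : ℝ))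
            * s ^ n := by
      funext s
      rw [hdt s, hdx s]
      have hSD : S s = D s + (-γ * s) ^ n / (n.factorial : ℝ) := by
        rw [hS, hD]; simp [Finset.sum_range_succ]
      rw [hSD, mul_pow]
      field_simp
      ring
    rw [hrec n t x, hint, intervalIntegral.integral_const_mul, integral_pow, IH t x]
    rw [Finset.sum_range_succ (fun j => (-γ * t) ^ j / (j.factorial : ℝ)) (n + 1)]
    have hnf : ((n + 1).factorial : ℝ) = (n + 1) * (n.factorial : ℝ) := by
      push_cast [Nat.factorial_succ]; ring
    have h1 : ((n : ℝ) + 1) ≠ 0 := by positivity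
    have h2 : (n.factorial : ℝ) ≠ 0 := Nat.cast_ne_zero.2 n.factorial_ne_zero
    rw [hnf]
    have hpow : (-γ * t) ^ (n + 1) = -γ * ((-γ) ^ n * t ^ (n + 1)) := by
      rw [mul_pow, pow_succ]; ring
    rw [hpow]
    field_simp
    ring

/-- Closed form and limit of the VIM iterates for the one-dimensional heat-like
model `U_t − γU_xx = −k cos x` with initial approximation `U₀(t,x) = c sin x`,
where `γ ≠ 0`. -/
theorem stmt12 (γ k c : ℝ) (hγ : γ ≠ 0) (U : ℕ → ℝ → ℝ → ℝ)
    (h0 : ∀ t x : ℝ, U 0 t x = c * Real.sin x)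
    (hrec : ∀ n : ℕ, ∀ t x : ℝ,
      U (n + 1) t x = U n t x -
        ∫ s in (0 : ℝ)..t,
          (deriv (fun s' : ℝ => U n s' x) s
            - γ * deriv (deriv (fun z : ℝ => U n s z)) x
            + k * Real.cos x)) :
    (∀ n : ℕ, 1 ≤ n → ∀ t x : ℝ,
      U n t x =
        c * Real.sin x * (∑ j ∈ Finset.range (n + 1), (-γ * t) ^ j / (j.factorial : ℝ))
          + (k / γ) * Real.cos x *
            (∑ j ∈ Finset.Icc 1 n, (-γ * t) ^ j / (j.factorial : ℝ)))
    ∧ (∀ t x : ℝ,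
      Tendsto (fun n : ℕ => U n t x) atTop
        (nhds (c * Real.sin x * Real.exp (-γ * t)
          + (k / γ) * Real.cos x * (Real.exp (-γ * t) - 1)))) := by
  have key := closed_form γ k c hγ U h0 hrec
  have hIcc : ∀ (n : ℕ) (t : ℝ),
      (∑ j ∈ Finset.Icc 1 n, (-γ * t) ^ j / (j.factorial : ℝ))
        = (∑ j ∈ Finset.range (n + 1), (-γ * t) ^ j / (j.factorial : ℝ)) - 1 := by
    intro n t
    have hset : Finset.range (n + 1) = insert 0 (Finset.Icc 1 n) := by
      ext m; simp; omega
    rw [hset, Finset.sum_insert (by simp)]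
    simp
  constructor
  · intro n _ t x
    rw [key n t x, hIcc n t]
  · intro t x
    have heq : (fun n : ℕ => U n t x)
        = fun n : ℕ => c * Real.sin x
            * (∑ j ∈ Finset.range (n + 1), (-γ * t) ^ j / (j.factorial : ℝ))
          + (k / γ) * Real.cos x
            * ((∑ j ∈ Finset.range (n + 1), (-γ * t) ^ j / (j.factorial : ℝ)) - 1) := by
      funext n; exact key n t x
    rw [heq]
    have hT : Tendsto (fun n : ℕ =>
        ∑ j ∈ Finset.range (n + 1), (-γ * t) ^ j / (j.factorial : ℝ)) atTop
        (nhds (Real.exp (-γ * t))) :=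
      (exp_partial' (-γ * t)).comp (tendsto_add_atTop_nat 1)
    exact (hT.const_mul (c * Real.sin x)).add
      ((hT.sub_const 1).const_mul ((k / γ) * Real.cos x))
end

section
/- Let γ₁, γ₂ > 0 and k₁, k₂, c₁, c₂ be real numbers, and set w = γ₁·γ₂. Define u₁(t,x) = c₁·sin(x)·cosh(√w·t) − (c₂·γ₂/√w)·sin(x)·sinh(√w·t) + (k₁/γ₁)·cos(x)·(cosh(√w·t) − 1) − (k₂/√w)·cos(x)·sinh(√w·t) and u₂(t,x) = c₂·sin(x)·cosh(√w·t) − (c₁·γ₁/√w)·sin(x)·sinh(√w·t) + (k₂/γ₂)·cos(x)·(cosh(√w·t) − 1) − (k₁/√w)·cos(x)·sinh(√w·t). Then for all t,x ∈ ℝ: ∂u₁/∂t(t,x) − γ₂·∂²u₂/∂x²(t,x) = −k₂·cos(x), ∂u₂/∂t(t,x) − γ₁·∂²u₁/∂x²(t,x) = −k₁·cos(x), and u₁(0,x) = c₁·sin(x), u₂(0,x) = c₂·sin(x). -/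
private lemma timeDeriv (A B C D a t : ℝ) :
    deriv (fun s : ℝ => A * Real.cosh (a * s) - B * Real.sinh (a * s)
      + C * (Real.cosh (a * s) - 1) - D * Real.sinh (a * s)) t
    = (A + C) * (a * Real.sinh (a * t)) - (B + D) * (a * Real.cosh (a * t)) := by
  have hid : HasDerivAt (fun s : ℝ => a * s) a t := by
    simpa using (hasDerivAt_id t).const_mul a
  have hcosh : HasDerivAt (fun s : ℝ => Real.cosh (a * s))
      (Real.sinh (a * t) * a) t := (Real.hasDerivAt_cosh (a * t)).comp t hid
  have hsinh : HasDerivAt (fun s : ℝ => Real.sinh (a * s))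
      (Real.cosh (a * t) * a) t := (Real.hasDerivAt_sinh (a * t)).comp t hid
  have h : HasDerivAt (fun s : ℝ => A * Real.cosh (a * s) - B * Real.sinh (a * s)
      + C * (Real.cosh (a * s) - 1) - D * Real.sinh (a * s))
      (A * (Real.sinh (a * t) * a) - B * (Real.cosh (a * t) * a)
        + C * (Real.sinh (a * t) * a) - D * (Real.cosh (a * t) * a)) t := by
    exact (((hcosh.const_mul A).sub (hsinh.const_mul B)).add
      (((hcosh.sub_const 1).const_mul C))).sub (hsinh.const_mul D)
  rw [h.deriv]; ring

private lemma spaceDeriv2 (P Q x : ℝ) :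
    deriv (deriv (fun z : ℝ => P * Real.sin z + Q * Real.cos z)) x
    = -(P * Real.sin x + Q * Real.cos x) := by
  have h1 : deriv (fun z : ℝ => P * Real.sin z + Q * Real.cos z)
      = fun z : ℝ => P * Real.cos z - Q * Real.sin z := by
    funext z
    have h : HasDerivAt (fun z : ℝ => P * Real.sin z + Q * Real.cos z)
        (P * Real.cos z + Q * (-Real.sin z)) z :=
      ((Real.hasDerivAt_sin z).const_mul P).add ((Real.hasDerivAt_cos z).const_mul Q)
    rw [h.deriv]; ring
  rw [h1]
  have h : HasDerivAt (fun z : ℝ => P * Real.cos z - Q * Real.sin z)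
      (P * (-Real.sin x) - Q * Real.cos x) x :=
    ((Real.hasDerivAt_cos x).const_mul P).sub ((Real.hasDerivAt_sin x).const_mul Q)
  rw [h.deriv]; ring

/-- The candidate endpoint functions `u₁`, `u₂` of the Seikkala solution of the
fuzzified heat-like model `U_t − γU_xx = −k cos x` (coefficient `P(x,γ) = −γ < 0`)
satisfy the coupled system and the initial conditions, where `w = γ₁γ₂`. -/
theorem stmt13 (γ₁ γ₂ k₁ k₂ c₁ c₂ : ℝ) (hγ₁ : 0 < γ₁) (hγ₂ : 0 < γ₂)
    (w : ℝ) (hw : w = γ₁ * γ₂) (u₁ u₂ : ℝ × ℝ → ℝ)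
    (hu₁ : ∀ t x : ℝ,
      u₁ (t, x) = c₁ * Real.sin x * Real.cosh (Real.sqrt w * t)
        - (c₂ * γ₂ / Real.sqrt w) * Real.sin x * Real.sinh (Real.sqrt w * t)
        + (k₁ / γ₁) * Real.cos x * (Real.cosh (Real.sqrt w * t) - 1)
        - (k₂ / Real.sqrt w) * Real.cos x * Real.sinh (Real.sqrt w * t))
    (hu₂ : ∀ t x : ℝ,
      u₂ (t, x) = c₂ * Real.sin x * Real.cosh (Real.sqrt w * t)
        - (c₁ * γ₁ / Real.sqrt w) * Real.sin x * Real.sinh (Real.sqrt w * t)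
        + (k₂ / γ₂) * Real.cos x * (Real.cosh (Real.sqrt w * t) - 1)
        - (k₁ / Real.sqrt w) * Real.cos x * Real.sinh (Real.sqrt w * t)) :
    (∀ t x : ℝ,
      deriv (fun s : ℝ => u₁ (s, x)) t
        - γ₂ * deriv (deriv (fun z : ℝ => u₂ (t, z))) x
      = -k₂ * Real.cos x)
    ∧ (∀ t x : ℝ,
      deriv (fun s : ℝ => u₂ (s, x)) t
        - γ₁ * deriv (deriv (fun z : ℝ => u₁ (t, z))) x
      = -k₁ * Real.cos x)
    ∧ (∀ x : ℝ, u₁ (0, x) = c₁ * Real.sin x)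
    ∧ (∀ x : ℝ, u₂ (0, x) = c₂ * Real.sin x) := by
  set a := Real.sqrt w with ha
  have hw0 : 0 < w := hw ▸ mul_pos hγ₁ hγ₂
  have ha0 : 0 < a := Real.sqrt_pos.mpr hw0
  have ha2 : a * a = γ₁ * γ₂ := by rw [ha, Real.mul_self_sqrt hw0.le, hw]
  have hane : a ≠ 0 := ne_of_gt ha0
  refine ⟨fun t x => ?_, fun t x => ?_, fun x => ?_, fun x => ?_⟩
  · have h1 : (fun s : ℝ => u₁ (s, x))
        = fun s : ℝ => (c₁ * Real.sin x) * Real.cosh (a * s)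
          - (c₂ * γ₂ / a * Real.sin x) * Real.sinh (a * s)
          + (k₁ / γ₁ * Real.cos x) * (Real.cosh (a * s) - 1)
          - (k₂ / a * Real.cos x) * Real.sinh (a * s) := by
      funext s; rw [hu₁ s x]
    have h2 : (fun z : ℝ => u₂ (t, z))
        = fun z : ℝ => (c₂ * Real.cosh (a * t) - c₁ * γ₁ / a * Real.sinh (a * t)) * Real.sin z
          + (k₂ / γ₂ * (Real.cosh (a * t) - 1) - k₁ / a * Real.sinh (a * t)) * Real.cos z := by
      funext z; rw [hu₂ t z]; ring
    rw [h1, timeDeriv, h2, spaceDeriv2]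
    field_simp
    linear_combination ((c₁ * Real.sin x * γ₁ + k₁ * Real.cos x)
      * Real.sinh (a*t)) * ha2
  · have h1 : (fun s : ℝ => u₂ (s, x))
        = fun s : ℝ => (c₂ * Real.sin x) * Real.cosh (a * s)
          - (c₁ * γ₁ / a * Real.sin x) * Real.sinh (a * s)
          + (k₂ / γ₂ * Real.cos x) * (Real.cosh (a * s) - 1)
          - (k₁ / a * Real.cos x) * Real.sinh (a * s) := by
      funext s; rw [hu₂ s x]
    have h2 : (fun z : ℝ => u₁ (t, z))
        = fun z : ℝ => (c₁ * Real.cosh (a * t) - c₂ * γ₂ / a * Real.sinh (a * t)) * Real.sin z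
          + (k₁ / γ₁ * (Real.cosh (a * t) - 1) - k₂ / a * Real.sinh (a * t)) * Real.cos z := by
      funext z; rw [hu₁ t z]; ring
    rw [h1, timeDeriv, h2, spaceDeriv2]
    field_simp
    linear_combination ((c₂ * Real.sin x * γ₂ + k₂ * Real.cos x)
      * Real.sinh (a*t)) * ha2
  · rw [hu₁ 0 x]; simp
  · rw [hu₂ 0 x]; simp
end

section
/- Let 0 < γ₁ ≤ γ₂, w = γ₁·γ₂, 0 ≤ c₁ ≤ c₂, and k₁ ≤ k₂ ≤ 0 be real numbers, and let x ∈ (0, π/2). Define A₁(x) = (c₁ − c₂·γ₂/√w)·sin(x) + (k₁/γ₁ − k₂/√w)·cos(x) and A₂(x) = (c₂ − c₁·γ₁/√w)·sin(x) + (k₂/γ₂ − k₁/√w)·cos(x). Then A₁(x) ≤ A₂(x). -/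
/-- The asymptotic amplitude coefficients satisfy `A₁(x) ≤ A₂(x)` for
`x ∈ (0, π/2)`, where `0 < γ₁ ≤ γ₂`, `w = γ₁γ₂`, `0 ≤ c₁ ≤ c₂`, `k₁ ≤ k₂ ≤ 0`. -/
theorem stmt14 (γ₁ γ₂ k₁ k₂ c₁ c₂ w : ℝ)
    (hγ₁ : 0 < γ₁) (hγ : γ₁ ≤ γ₂) (hw : w = γ₁ * γ₂)
    (hc₁ : 0 ≤ c₁) (hc : c₁ ≤ c₂)
    (hk : k₁ ≤ k₂) (hk₂ : k₂ ≤ 0)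
    (x : ℝ) (hx0 : 0 < x) (hx1 : x < Real.pi / 2)
    (A₁ A₂ : ℝ → ℝ)
    (hA₁ : ∀ z : ℝ, A₁ z = (c₁ - c₂ * γ₂ / Real.sqrt w) * Real.sin z
      + (k₁ / γ₁ - k₂ / Real.sqrt w) * Real.cos z)
    (hA₂ : ∀ z : ℝ, A₂ z = (c₂ - c₁ * γ₁ / Real.sqrt w) * Real.sin z
      + (k₂ / γ₂ - k₁ / Real.sqrt w) * Real.cos z) :
    A₁ x ≤ A₂ x := by
  rw [hA₁, hA₂]
  have hγ₂ : 0 < γ₂ := lt_of_lt_of_le hγ₁ hγ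
  have hs : 0 < Real.sqrt w := Real.sqrt_pos.mpr (by rw [hw]; positivity)
  set s := Real.sqrt w with hsdef
  have hsin : 0 < Real.sin x := Real.sin_pos_of_pos_of_lt_pi hx0
    (lt_trans hx1 (by linarith [Real.pi_pos]))
  have hcos : 0 < Real.cos x := Real.cos_pos_of_mem_Ioo ⟨by linarith [Real.pi_pos], hx1⟩
  have h1 : c₁ - c₂ * γ₂ / s ≤ c₂ - c₁ * γ₁ / s := by
    have : c₁ * γ₁ / s ≤ c₂ * γ₂ / s := by
      gcongr <;> nlinarith
    linarith
  have h2 : k₁ / γ₁ - k₂ / s ≤ k₂ / γ₂ - k₁ / s := by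
    have ha : k₁ / γ₁ ≤ k₂ / γ₂ := by
      rw [div_le_div_iff₀ hγ₁ hγ₂]
      nlinarith
    have hb : k₁ / s ≤ k₂ / s := by gcongr
    linarith
  exact add_le_add (mul_le_mul_of_nonneg_right h1 hsin.le)
    (mul_le_mul_of_nonneg_right h2 hcos.le)
end
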